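/- Let v_1, ..., v_N be unit vectors in R^d with all coordinates nonnegative, where d ≥ 2 and d divides N. Then Σ_{i<j} ⟨v_i, v_j⟩ ≥ N(N-d)/(2d), with equality attained when exactly N/d of the vectors equal each standard basis vector. -/

import Mathlib

theorem sum_pairwise_inner_ge_of_nonneg_unit
    (d N : ℕ) (hd : 2 ≤ d) (hdvd : d ∣ N)
    (v : Fin N → EuclideanSpace ℝ (Fin d))
    (hunit : ∀ i, ‖v i‖ = 1)
    (hnonneg : ∀ i k, 0 ≤ v i k) :
    (N : ℝ) * ((N : ℝ) - (d : ℝ)) / (2 * (d : ℝ)) ≤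
      ∑ i : Fin N, ∑ j : Fin N, (if i < j then (inner ℝ (v i) (v j) : ℝ) else 0) ∧
    ((∃ a : Fin N → Fin d,
        (∀ i, v i = EuclideanSpace.single (a i) (1 : ℝ)) ∧
        (∀ j : Fin d, (Finset.univ.filter (fun i => a i = j)).card = N / d)) →
      ∑ i : Fin N, ∑ j : Fin N, (if i < j then (inner ℝ (v i) (v j) : ℝ) else 0) =
        (N : ℝ) * ((N : ℝ) - (d : ℝ)) / (2 * (d : ℝ))) := by
  have hd0 : (0:ℝ) < (d:ℝ) := by
    have : 0 < d := lt_of_lt_of_le (by norm_num) hd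
    exact_mod_cast this
  have hinner : ∀ x y : EuclideanSpace ℝ (Fin d), (inner ℝ x y : ℝ) = ∑ k, x k * y k := by
    intro x y
    simp [PiLp.inner_apply, RCLike.inner_apply, mul_comm]
  have hdiag : ∀ i, (inner ℝ (v i) (v i) : ℝ) = 1 := by
    intro i
    rw [real_inner_self_eq_norm_sq, hunit i]; norm_num
  set T : ℝ := ∑ i : Fin N, ∑ j : Fin N, (if i < j then (inner ℝ (v i) (v j) : ℝ) else 0) with hT
  set F : ℝ := ∑ i : Fin N, ∑ j : Fin N, (inner ℝ (v i) (v j) : ℝ) with hFdef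
  -- decomposition F = 2T + N
  have hdecomp : ∀ i j : Fin N, (inner ℝ (v i) (v j) : ℝ) =
      (if i < j then (inner ℝ (v i) (v j) : ℝ) else 0) +
      (if j < i then (inner ℝ (v i) (v j) : ℝ) else 0) +
      (if i = j then (1:ℝ) else 0) := by
    intro i j
    rcases lt_trichotomy i j with h | h | h
    · simp [h, not_lt_of_gt h, h.ne]
    · simp [h, lt_irrefl, hdiag, hunit]
    · simp [h, not_lt_of_gt h, h.ne']
  have hT' : (∑ i : Fin N, ∑ j : Fin N, (if j < i then (inner ℝ (v i) (v j) : ℝ) else 0)) = T := by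
    rw [Finset.sum_comm, hT]
    refine Finset.sum_congr rfl fun i _ => Finset.sum_congr rfl fun j _ => ?_
    exact if_congr Iff.rfl (real_inner_comm _ _) rfl
  have hdiagsum : (∑ i : Fin N, ∑ j : Fin N, (if i = j then (1:ℝ) else 0)) = (N:ℝ) := by
    simp
  have hF2T : F = 2 * T + N := by
    rw [hFdef]
    have : (∑ i : Fin N, ∑ j : Fin N, (inner ℝ (v i) (v j) : ℝ)) =
        (∑ i : Fin N, ∑ j : Fin N, ((if i < j then (inner ℝ (v i) (v j) : ℝ) else 0) +
          (if j < i then (inner ℝ (v i) (v j) : ℝ) else 0) + (if i = j then (1:ℝ) else 0))) :=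
      Finset.sum_congr rfl fun i _ => Finset.sum_congr rfl fun j _ => hdecomp i j
    rw [this]
    simp only [Finset.sum_add_distrib]
    rw [hT', hdiagsum, ← hT]
    ring
  constructor
  · -- inequality
    set s : Fin d → ℝ := fun k => ∑ i : Fin N, v i k with hs
    have hFs : F = ∑ k : Fin d, (s k)^2 := by
      rw [hFdef]
      have h1 : ∀ k : Fin d, (s k)^2 = ∑ i : Fin N, ∑ j : Fin N, v i k * v j k := by
        intro k
        rw [sq, hs, Finset.sum_mul_sum]
      calc (∑ i : Fin N, ∑ j : Fin N, (inner ℝ (v i) (v j) : ℝ))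
          = ∑ i : Fin N, ∑ j : Fin N, ∑ k : Fin d, v i k * v j k :=
            Finset.sum_congr rfl fun i _ => Finset.sum_congr rfl fun j _ => hinner _ _
        _ = ∑ i : Fin N, ∑ k : Fin d, ∑ j : Fin N, v i k * v j k :=
            Finset.sum_congr rfl fun i _ => Finset.sum_comm
        _ = ∑ k : Fin d, ∑ i : Fin N, ∑ j : Fin N, v i k * v j k := Finset.sum_comm
        _ = ∑ k : Fin d, (s k)^2 := Finset.sum_congr rfl fun k _ => (h1 k).symm
    have hone : ∀ i, (1:ℝ) ≤ ∑ k : Fin d, v i k := by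
      intro i
      have h1 : ∑ k : Fin d, (v i k)^2 = 1 := by
        have := hdiag i
        rw [hinner] at this
        simpa [sq] using this
      have h2 : ∑ k : Fin d, (v i k)^2 ≤ (∑ k : Fin d, v i k)^2 :=
        Finset.sum_sq_le_sq_sum_of_nonneg fun k _ => hnonneg i k
      have h3 : (0:ℝ) ≤ ∑ k : Fin d, v i k :=
        Finset.sum_nonneg fun k _ => hnonneg i k
      nlinarith
    have hssum : (N:ℝ) ≤ ∑ k : Fin d, s k := by
      have : (∑ k : Fin d, s k) = ∑ i : Fin N, ∑ k : Fin d, v i k := Finset.sum_comm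
      rw [this]
      calc (N:ℝ) = ∑ _i : Fin N, (1:ℝ) := by simp
        _ ≤ ∑ i : Fin N, ∑ k : Fin d, v i k := Finset.sum_le_sum fun i _ => hone i
    have hCS : (∑ k : Fin d, s k)^2 ≤ (d:ℝ) * ∑ k : Fin d, (s k)^2 := by
      simpa using (sq_sum_le_card_mul_sum_sq (s := (Finset.univ : Finset (Fin d))) (f := s))
    have hN2 : (N:ℝ)^2 ≤ (d:ℝ) * F := by
      rw [hFs]
      have hN0 : (0:ℝ) ≤ (N:ℝ) := Nat.cast_nonneg N
      nlinarith
    rw [div_le_iff₀ (by positivity)]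
    nlinarith [hF2T, hN2]
  · -- equality case
    rintro ⟨a, hva, hcard⟩
    have hio : ∀ i j, (inner ℝ (v i) (v j) : ℝ) = if a j = a i then (1:ℝ) else 0 := by
      intro i j
      rw [hinner, hva i, hva j]
      rcases eq_or_ne (a j) (a i) with h | h
      · simp [h, EuclideanSpace.single_apply]
      · rw [if_neg h]
        apply Finset.sum_eq_zero
        intro k _
        rcases eq_or_ne k (a i) with hk | hk
        · simp [EuclideanSpace.single_apply, hk, (h ∘ Eq.symm)]
          intro hh; exact absurd (hh ▸ hk : k = a j) (by simp [hk]; exact fun h2 => h (h2 ▸ hk ▸ rfl))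
        · simp [EuclideanSpace.single_apply, hk]
    have hFval : F = (N:ℝ) * ((N:ℝ)/(d:ℝ)) := by
      rw [hFdef]
      have : ∀ i : Fin N, (∑ j : Fin N, (inner ℝ (v i) (v j) : ℝ)) = ((N/d : ℕ):ℝ) := by
        intro i
        calc (∑ j : Fin N, (inner ℝ (v i) (v j) : ℝ))
            = ∑ j : Fin N, (if a j = a i then (1:ℝ) else 0) :=
              Finset.sum_congr rfl fun j _ => hio i j
          _ = ((Finset.univ.filter (fun j => a j = a i)).card : ℝ) := by simp [Finset.sum_boole]
          _ = ((N/d : ℕ):ℝ) := by rw [hcard (a i)]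
      rw [Finset.sum_congr rfl fun i _ => this i]
      rw [Finset.sum_const, Finset.card_univ, Fintype.card_fin, nsmul_eq_mul]
      rw [Nat.cast_div hdvd (by positivity)]
    have : 2 * T + (N:ℝ) = (N:ℝ) * ((N:ℝ)/(d:ℝ)) := by rw [← hF2T, hFval]
    field_simp at this ⊢
    linarith
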